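/- Let 0 < χ < 1. Then the rescaled free energy F_resc[ρ] = ∫_ℝ ρ(x) log ρ(x) dx + χ ∬_{ℝ×ℝ} log|x−y| ρ(x)ρ(y) dx dy + (1/2)∫_ℝ |x|² ρ(x) dx is bounded from below uniformly over all probability densities ρ on ℝ with zero center of mass, finite second moment, finite entropy and finite interaction integral. (Logarithmic HLS inequality with quadratic confinement, one-dimensional case.) -/

import Mathlib

open MeasureTheory Real

/-- Legendre-type pointwise inequality: `a*t ≤ a log a + e^t - a` for `a ≥ 0`. -/
lemma key_ineq (a t : ℝ) (ha : 0 ≤ a) : a * t ≤ a * Real.log a + Real.exp t - a := by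
  rcases eq_or_lt_of_le ha with h | h
  · rw [← h]; simp; positivity
  · have h1 : t - Real.log a ≤ Real.exp (t - Real.log a) - 1 := by
      linarith [Real.add_one_le_exp (t - Real.log a)]
    have h2 : a * (t - Real.log a) ≤ a * (Real.exp (t - Real.log a) - 1) :=
      mul_le_mul_of_nonneg_left h1 ha
    have h3 : a * Real.exp (t - Real.log a) = Real.exp t := by
      rw [Real.exp_sub, Real.exp_log h]; field_simp
    nlinarith


set_option maxHeartbeats 1000000 in
/-- Logarithmic HLS inequality with quadratic confinement in one dimension:
for `0 < χ < 1`, the rescaled free energy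
`F_resc[ρ] = ∫ ρ log ρ + χ ∬ log|x−y| ρ(x)ρ(y) + (1/2) ∫ |x|² ρ`
is bounded from below uniformly over all zero-center-of-mass probability
densities with finite second moment, entropy and interaction integral. -/
theorem logHLS_with_confinement (χ : ℝ) (hχ0 : 0 < χ) (hχ1 : χ < 1) :
    ∃ C : ℝ, ∀ ρ : ℝ → ℝ,
      (∀ x, 0 ≤ ρ x) →
      (∫ x : ℝ, ρ x) = 1 →
      (∫ x : ℝ, x * ρ x) = 0 →
      Integrable (fun x : ℝ => x ^ 2 * ρ x) →
      Integrable (fun x : ℝ => ρ x * Real.log (ρ x)) →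
      Integrable (fun p : ℝ × ℝ => Real.log |p.1 - p.2| * ρ p.1 * ρ p.2) →
      C ≤ (∫ x : ℝ, ρ x * Real.log (ρ x)) +
            χ * (∫ p : ℝ × ℝ, Real.log |p.1 - p.2| * ρ p.1 * ρ p.2) +
            (1 / 2) * ∫ x : ℝ, x ^ 2 * ρ x := by
  -- constants
  set l : ℝ := (1 + χ) / 2 with hl_def
  have hl0 : 0 < l := by simp only [hl_def]; linarith
  have hl1 : l < 1 := by simp only [hl_def]; linarith
  have hχl : χ < l := by simp only [hl_def]; linarith
  set β : ℝ := χ / l with hβ_def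
  have hβ0 : 0 < β := div_pos hχ0 hl0
  have hβ1 : β < 1 := (div_lt_one hl0).mpr hχl
  set b : ℝ := 1 / 2 - β / 8 with hb_def
  have hb0 : 0 < b := by simp only [hb_def]; linarith
  set a : ℝ := 1 - β with ha_def
  have ha0 : 0 < a := by simp only [ha_def]; linarith
  set c : ℝ := b / a with hc_def
  have hc0 : 0 < c := div_pos hb0 ha0
  -- the kernel k
  set k : ℝ → ℝ := fun u => Set.indicator (Set.Ioc (0:ℝ) 1) (fun v => v ^ (-l)) u
      + Set.indicator (Set.Ioc (0:ℝ) 1) (fun v => v ^ (-l)) (-u) with hk_def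
  have hind : ∀ w : ℝ, 0 ≤ Set.indicator (Set.Ioc (0:ℝ) 1) (fun v => v ^ (-l)) w :=
    fun w => Set.indicator_nonneg (fun v hv => Real.rpow_nonneg hv.1.le _) w
  have hk_int : Integrable k := by
    have h0 : IntegrableOn (fun v : ℝ => v ^ (-l)) (Set.Ioc 0 1) := by
      have := intervalIntegral.intervalIntegrable_rpow' (a := 0) (b := 1) (r := -l)
        (by linarith)
      rwa [intervalIntegrable_iff_integrableOn_Ioc_of_le (by norm_num)] at this
    have h1 : Integrable (fun u : ℝ => Set.indicator (Set.Ioc (0:ℝ) 1) (fun v => v ^ (-l)) u) := by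
      rwa [integrable_indicator_iff measurableSet_Ioc]
    exact h1.add h1.comp_neg
  have hk_nonneg : ∀ u, 0 ≤ k u := fun u => add_nonneg (hind u) (hind (-u))
  have hk_ge : ∀ u : ℝ, u ≠ 0 → |u| ≤ 1 → |u| ^ (-l) ≤ k u := by
    intro u hu hu1
    have hku : k u = Set.indicator (Set.Ioc (0:ℝ) 1) (fun v => v ^ (-l)) u
        + Set.indicator (Set.Ioc (0:ℝ) 1) (fun v => v ^ (-l)) (-u) := by rw [hk_def]
    rcases lt_or_gt_of_ne hu with hneg | hpos
    · have habs : |u| = -u := abs_of_neg hneg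
      have hmem : -u ∈ Set.Ioc (0:ℝ) 1 := ⟨by linarith, habs ▸ hu1⟩
      rw [habs, hku, Set.indicator_of_mem hmem]
      linarith [hind u]
    · have habs : |u| = u := abs_of_pos hpos
      have hmem : u ∈ Set.Ioc (0:ℝ) 1 := ⟨hpos, habs ▸ hu1⟩
      rw [habs, hku, Set.indicator_of_mem hmem]
      linarith [hind (-u)]
  -- constants given by fixed integrals
  set K : ℝ := ∫ u, k u with hK_def
  set G : ℝ := ∫ y : ℝ, Real.exp (-(1/8) * y ^ 2) with hG_def
  set Gc : ℝ := ∫ x : ℝ, Real.exp (-c * x ^ 2) with hGc_def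
  have hGauss8 : Integrable (fun y : ℝ => Real.exp (-(1/8) * y ^ 2)) :=
    integrable_exp_neg_mul_sq (by norm_num)
  have hGaussc : Integrable (fun x : ℝ => Real.exp (-c * x ^ 2)) :=
    integrable_exp_neg_mul_sq hc0
  refine ⟨a * (1 - Gc) + β * (1 - K - G), ?_⟩
  intro ρ hρ0 hρ1 _hcm hM hS hI
  -- ρ is integrable
  have hρint : Integrable ρ := by
    by_contra h
    rw [integral_undef h] at hρ1
    exact one_ne_zero hρ1.symm
  set S : ℝ := ∫ x : ℝ, ρ x * Real.log (ρ x) with hS_def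
  set M : ℝ := ∫ x : ℝ, x ^ 2 * ρ x with hM_def
  set I : ℝ := ∫ p : ℝ × ℝ, Real.log |p.1 - p.2| * ρ p.1 * ρ p.2 with hI_def
  -- Master pointwise inequality on ℝ²
  have master : ∀ p : ℝ × ℝ,
      -(χ/l) * (ρ p.1 * (ρ p.2 * Real.log (ρ p.2)) + ρ p.1 * ((1/8) * (p.2 ^ 2 * ρ p.2))
          - ρ p.1 * ρ p.2 + ρ p.1 * k (p.2 - p.1) + ρ p.1 * Real.exp (-(1/8) * p.2 ^ 2))
        ≤ χ * (Real.log |p.1 - p.2| * ρ p.1 * ρ p.2) := by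
    rintro ⟨x, y⟩
    simp only
    set r : ℝ := |x - y| with hr_def
    set m : ℝ := max (-Real.log r) 0 with hm_def
    have hm0 : 0 ≤ m := le_max_right _ _
    have hm : -m ≤ Real.log r := by
      rcases le_total (-Real.log r) 0 with h | h
      · rw [hm_def, max_eq_right h]; linarith
      · rw [hm_def, max_eq_left h]; linarith
    have e1 : ρ y * (l * m - (1/8) * y ^ 2) ≤
        ρ y * Real.log (ρ y) + Real.exp (l * m - (1/8) * y ^ 2) - ρ y :=
      key_ineq _ _ (hρ0 y)
    have hknn := hk_nonneg (y - x)
    have e2 : Real.exp (l * m - (1/8) * y ^ 2) ≤ k (y - x) + Real.exp (-(1/8) * y ^ 2) := by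
      have hexp_le : Real.exp (-(1/8) * y ^ 2) ≤ 1 := by
        rw [Real.exp_le_one_iff]; nlinarith [sq_nonneg y]
      rcases eq_or_ne x y with hxy | hxy
      · have hr : r = 0 := by rw [hr_def, hxy, sub_self, abs_zero]
        have hm_eq : m = 0 := by rw [hm_def, hr, Real.log_zero, neg_zero, max_self]
        rw [hm_eq, show l * 0 - (1/8) * y ^ 2 = -(1/8) * y ^ 2 by ring]
        exact le_add_of_nonneg_left hknn
      · have hr0 : 0 < r := by rw [hr_def]; exact abs_sub_pos.mpr hxy
        rcases le_or_gt r 1 with hr1 | hr1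
        · have hlog : Real.log r ≤ 0 := Real.log_nonpos hr0.le hr1
          have hm_eq : m = -Real.log r := by rw [hm_def]; exact max_eq_left (by linarith)
          have hrl : Real.exp (l * m) = r ^ (-l) := by
            rw [hm_eq, Real.rpow_def_of_pos hr0]
            congr 1; ring
          have hsplit : Real.exp (l * m - (1/8) * y ^ 2)
              = Real.exp (l * m) * Real.exp (-(1/8) * y ^ 2) := by
            rw [← Real.exp_add]; congr 1; ring
          have hkge : r ^ (-l) ≤ k (y - x) := by
            have h1 : (y - x) ≠ 0 := sub_ne_zero.mpr (Ne.symm hxy)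
            have h2 : |y - x| = r := by rw [hr_def, abs_sub_comm]
            have := hk_ge (y - x) h1 (by rw [h2]; exact hr1)
            rwa [h2] at this
          have hrpos : (0:ℝ) ≤ r ^ (-l) := Real.rpow_nonneg hr0.le _
          have hep : (0:ℝ) < Real.exp (-(1/8) * y ^ 2) := Real.exp_pos _
          calc Real.exp (l * m - (1/8) * y ^ 2)
              = r ^ (-l) * Real.exp (-(1/8) * y ^ 2) := by rw [hsplit, hrl]
            _ ≤ r ^ (-l) * 1 := mul_le_mul_of_nonneg_left hexp_le hrpos
            _ = r ^ (-l) := mul_one _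
            _ ≤ k (y - x) := hkge
            _ ≤ k (y - x) + Real.exp (-(1/8) * y ^ 2) := by linarith
        · have hlog : 0 < Real.log r := Real.log_pos hr1
          have hm_eq : m = 0 := by rw [hm_def]; exact max_eq_right (by linarith)
          rw [hm_eq, show l * 0 - (1/8) * y ^ 2 = -(1/8) * y ^ 2 by ring]
          exact le_add_of_nonneg_left hknn
    -- assemble
    set A : ℝ := ρ y * Real.log (ρ y) + (1/8) * (y ^ 2 * ρ y) - ρ y + k (y - x)
        + Real.exp (-(1/8) * y ^ 2) with hA_def
    have hA : l * (m * ρ y) ≤ A := by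
      have expand : ρ y * (l * m - (1/8) * y ^ 2) = l * (m * ρ y) - (1/8) * (y ^ 2 * ρ y) := by
        ring
      rw [expand] at e1
      rw [hA_def]; linarith
    have hA2 : m * ρ y ≤ A / l := (le_div_iff₀' hl0).mpr hA
    have hA3 : ρ x * (m * ρ y) ≤ ρ x * (A / l) := mul_le_mul_of_nonneg_left hA2 (hρ0 x)
    have step1 : -m * (ρ x * ρ y) ≤ Real.log r * (ρ x * ρ y) :=
      mul_le_mul_of_nonneg_right hm (mul_nonneg (hρ0 x) (hρ0 y))
    calc -(χ/l) * (ρ x * (ρ y * Real.log (ρ y)) + ρ x * ((1/8) * (y ^ 2 * ρ y))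
          - ρ x * ρ y + ρ x * k (y - x) + ρ x * Real.exp (-(1/8) * y ^ 2))
        = -(χ * (ρ x * (A / l))) := by rw [hA_def]; field_simp
      _ ≤ -(χ * (ρ x * (m * ρ y))) := by
          have := mul_le_mul_of_nonneg_left hA3 hχ0.le
          linarith
      _ = χ * (-m * (ρ x * ρ y)) := by ring
      _ ≤ χ * (Real.log r * (ρ x * ρ y)) := mul_le_mul_of_nonneg_left step1 hχ0.le
      _ = χ * (Real.log |x - y| * ρ x * ρ y) := by rw [hr_def]; ring
  -- Integrability of the pieces
  have hvol : (volume : Measure (ℝ × ℝ)) = (volume : Measure ℝ).prod volume :=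
    Measure.volume_eq_prod ℝ ℝ
  have hQ1 : Integrable (fun p : ℝ × ℝ => ρ p.1 * (ρ p.2 * Real.log (ρ p.2))) := by
    rw [hvol]; exact hρint.mul_prod hS
  have hQ2 : Integrable (fun p : ℝ × ℝ => ρ p.1 * ((1/8) * (p.2 ^ 2 * ρ p.2))) := by
    rw [hvol]; exact hρint.mul_prod (hM.const_mul (1/8))
  have hQ3 : Integrable (fun p : ℝ × ℝ => ρ p.1 * ρ p.2) := by
    rw [hvol]; exact hρint.mul_prod hρint
  have hT : MeasurePreserving (fun z : ℝ × ℝ => (z.1, z.2 - z.1))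
      ((volume : Measure ℝ).prod volume) ((volume : Measure ℝ).prod volume) :=
    measurePreserving_prod_sub volume volume
  have hTemb : MeasurableEmbedding (fun z : ℝ × ℝ => (z.1, z.2 - z.1)) :=
    (MeasurableEquiv.shearSubRight ℝ).measurableEmbedding
  have hF : Integrable (fun q : ℝ × ℝ => ρ q.1 * k q.2) ((volume : Measure ℝ).prod volume) :=
    hρint.mul_prod hk_int
  have hQ4 : Integrable (fun p : ℝ × ℝ => ρ p.1 * k (p.2 - p.1)) := by
    rw [hvol]
    have := (hT.integrable_comp_emb hTemb (g := fun q : ℝ × ℝ => ρ q.1 * k q.2)).mpr hF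
    simpa [Function.comp_def] using this
  have hQ5 : Integrable (fun p : ℝ × ℝ => ρ p.1 * Real.exp (-(1/8) * p.2 ^ 2)) := by
    rw [hvol]; exact hρint.mul_prod hGauss8
  have hQ12 : Integrable (fun p : ℝ × ℝ => ρ p.1 * (ρ p.2 * Real.log (ρ p.2))
      + ρ p.1 * ((1/8) * (p.2 ^ 2 * ρ p.2))) := hQ1.add hQ2
  have hQ123 : Integrable (fun p : ℝ × ℝ => ρ p.1 * (ρ p.2 * Real.log (ρ p.2))
      + ρ p.1 * ((1/8) * (p.2 ^ 2 * ρ p.2)) - ρ p.1 * ρ p.2) := hQ12.sub hQ3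
  have hQ1234 : Integrable (fun p : ℝ × ℝ => ρ p.1 * (ρ p.2 * Real.log (ρ p.2))
      + ρ p.1 * ((1/8) * (p.2 ^ 2 * ρ p.2)) - ρ p.1 * ρ p.2 + ρ p.1 * k (p.2 - p.1)) :=
    hQ123.add hQ4
  have hQall : Integrable (fun p : ℝ × ℝ => ρ p.1 * (ρ p.2 * Real.log (ρ p.2))
      + ρ p.1 * ((1/8) * (p.2 ^ 2 * ρ p.2)) - ρ p.1 * ρ p.2 + ρ p.1 * k (p.2 - p.1)
      + ρ p.1 * Real.exp (-(1/8) * p.2 ^ 2)) := hQ1234.add hQ5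
  have hRHS : Integrable (fun p : ℝ × ℝ =>
      -(χ/l) * (ρ p.1 * (ρ p.2 * Real.log (ρ p.2)) + ρ p.1 * ((1/8) * (p.2 ^ 2 * ρ p.2))
        - ρ p.1 * ρ p.2 + ρ p.1 * k (p.2 - p.1) + ρ p.1 * Real.exp (-(1/8) * p.2 ^ 2))) :=
    hQall.const_mul _
  have hLHS : Integrable (fun p : ℝ × ℝ => χ * (Real.log |p.1 - p.2| * ρ p.1 * ρ p.2)) :=
    hI.const_mul χ
  have hmono := integral_mono hRHS hLHS master
  -- compute both sides
  have hI1 : (∫ p : ℝ × ℝ, ρ p.1 * (ρ p.2 * Real.log (ρ p.2))) = S := by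
    rw [hvol, integral_prod_mul ρ (fun y : ℝ => ρ y * Real.log (ρ y)), hρ1, one_mul]
  have hI2 : (∫ p : ℝ × ℝ, ρ p.1 * ((1/8) * (p.2 ^ 2 * ρ p.2))) = (1/8) * M := by
    rw [hvol, integral_prod_mul ρ (fun y : ℝ => (1/8) * (y ^ 2 * ρ y)), hρ1, one_mul,
      integral_const_mul]
  have hI3 : (∫ p : ℝ × ℝ, ρ p.1 * ρ p.2) = 1 := by
    rw [hvol, integral_prod_mul ρ ρ, hρ1, one_mul]
  have hI4 : (∫ p : ℝ × ℝ, ρ p.1 * k (p.2 - p.1)) = K := by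
    rw [hvol]
    have hcomp := hT.integral_comp hTemb (fun q : ℝ × ℝ => ρ q.1 * k q.2)
    simp only at hcomp
    rw [hcomp, integral_prod_mul ρ k, hρ1, one_mul]
  have hI5 : (∫ p : ℝ × ℝ, ρ p.1 * Real.exp (-(1/8) * p.2 ^ 2)) = G := by
    rw [hvol, integral_prod_mul ρ (fun y : ℝ => Real.exp (-(1/8) * y ^ 2)), hρ1, one_mul]
  have hsum : (∫ p : ℝ × ℝ, (ρ p.1 * (ρ p.2 * Real.log (ρ p.2))
      + ρ p.1 * ((1/8) * (p.2 ^ 2 * ρ p.2)) - ρ p.1 * ρ p.2 + ρ p.1 * k (p.2 - p.1)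
      + ρ p.1 * Real.exp (-(1/8) * p.2 ^ 2))) = S + (1/8) * M - 1 + K + G := by
    rw [integral_add hQ1234 hQ5, integral_add hQ123 hQ4, integral_sub hQ12 hQ3,
      integral_add hQ1 hQ2, hI1, hI2, hI3, hI4, hI5]
  have hRHSval : (∫ p : ℝ × ℝ,
      -(χ/l) * (ρ p.1 * (ρ p.2 * Real.log (ρ p.2)) + ρ p.1 * ((1/8) * (p.2 ^ 2 * ρ p.2))
        - ρ p.1 * ρ p.2 + ρ p.1 * k (p.2 - p.1) + ρ p.1 * Real.exp (-(1/8) * p.2 ^ 2)))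
      = -(χ/l) * (S + (1/8) * M - 1 + K + G) := by
    rw [integral_const_mul, hsum]
  have hLHSval : (∫ p : ℝ × ℝ, χ * (Real.log |p.1 - p.2| * ρ p.1 * ρ p.2)) = χ * I := by
    rw [integral_const_mul, hI_def]
  rw [hRHSval, hLHSval] at hmono
  -- entropy lower bound
  have hent_pt : ∀ x : ℝ, -c * (x ^ 2 * ρ x) ≤
      (ρ x * Real.log (ρ x) - ρ x) + Real.exp (-c * x ^ 2) := by
    intro x
    have := key_ineq (ρ x) (-c * x ^ 2) (hρ0 x)
    nlinarith [this]
  have hE1 : Integrable (fun x : ℝ => ρ x * Real.log (ρ x) - ρ x) := hS.sub hρint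
  have hE2 : Integrable (fun x : ℝ => (ρ x * Real.log (ρ x) - ρ x) + Real.exp (-c * x ^ 2)) :=
    hE1.add hGaussc
  have hent_int := integral_mono (hM.const_mul (-c)) hE2 hent_pt
  rw [integral_const_mul, integral_add hE1 hGaussc, integral_sub hS hρint, hρ1,
    ← hS_def, ← hM_def, ← hGc_def] at hent_int
  -- hent_int : -c * M ≤ S - 1 + Gc
  have hβl : χ / l = β := rfl
  rw [hβl] at hmono
  have hane : a ≠ 0 := ha0.ne'
  clear_value l β b a c k K G Gc S M I
  -- hmono : -β * (S + 1/8*M - 1 + K + G) ≤ χ * I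
  have h5 : a * (1 - Gc) ≤ a * (S + c * M) := by
    apply mul_le_mul_of_nonneg_left _ ha0.le
    linarith [hent_int]
  have h6 : a * (S + c * M) = a * S + b * M := by
    have h : a * (c * M) = b * M := by
      rw [hc_def]; field_simp
    rw [mul_add, h]
  have h8 : a * (1 - Gc) ≤ a * S + b * M := by rw [← h6]; exact h5
  have E2 : a * S = S - β * S := by rw [ha_def]; ring
  have E3 : b * M = (1/2) * M - (β/8) * M := by rw [hb_def]; ring
  linarith [h8, hmono, E2, E3]
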